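/- For every natural number n ≥ 1: for each i with 1 ≤ i ≤ n−1, the number of rim vertices of G_n whose degree in G_n equals i is exactly 2^i·3^{n−1−i}; the number of rim vertices of degree n is exactly 2^n (these are precisely the leaves of G_n); and every rim vertex of G_n has degree i for some i with 1 ≤ i ≤ n. -/

import Mathlib

namespace DSFN

/-- Vertex set of the `n`-th generation graph `G n` of the Barabási–Ravasz–Vicsek
deterministic scale-free network: `Fin n → Fin 3`, which is canonically
`{0,1,2} × V(G (n-1))` (first coordinate = which of the three copies). -/
abbrev Vert (n : ℕ) : Type := Fin n → Fin 3

/-- The root of `G n`: the all-zero vertex. -/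
def root (n : ℕ) : Vert n := fun _ => 0

/-- The leaf set of `G n`: recursively, leaves of `G n` are the vertices `(t, ℓ)` with
`t ∈ {1,2}` and `ℓ` a leaf of `G (n-1)`; equivalently all coordinates are nonzero. -/
def IsLeaf {n : ℕ} (v : Vert n) : Prop := ∀ i, v i ≠ 0

/-- The hub vertices of `G n`: the unique hub of `G 1` is the root `0`, and the hubs of
`G n` are the vertices `(t, h)` with `h` a hub of `G (n-1)`; equivalently the last
coordinate vanishes. All other vertices are rim vertices. -/
def IsHub {n : ℕ} (v : Vert n) : Prop := ∀ i : Fin n, (i : ℕ) + 1 = n → v i = 0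

/-- Adjacency in `G n` : each of the three copies of `G (n-1)` is an induced subgraph,
and in addition the root is joined to every vertex `(t, ℓ)` with `t ∈ {1,2}` and
`ℓ` a leaf of `G (n-1)`. -/
def Adj : (n : ℕ) → Vert n → Vert n → Prop
  | 0 => fun _ _ => False
  | n + 1 => fun u v =>
      (u 0 = v 0 ∧ Adj n (Fin.tail u) (Fin.tail v)) ∨
      (u = root (n + 1) ∧ (v 0 = 1 ∨ v 0 = 2) ∧ IsLeaf (Fin.tail v)) ∨
      (v = root (n + 1) ∧ (u 0 = 1 ∨ u 0 = 2) ∧ IsLeaf (Fin.tail u))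

instance instDecIsLeaf {n : ℕ} : DecidablePred (IsLeaf (n := n)) := fun v =>
  inferInstanceAs (Decidable (∀ i, v i ≠ 0))

instance instDecIsHub {n : ℕ} : DecidablePred (IsHub (n := n)) := fun v =>
  inferInstanceAs (Decidable (∀ i : Fin n, (i : ℕ) + 1 = n → v i = 0))

instance instDecAdj : (n : ℕ) → DecidableRel (Adj n)
  | 0 => fun _ _ => inferInstanceAs (Decidable False)
  | n + 1 => fun u v =>
      letI := instDecAdj n
      inferInstanceAs (Decidable
        ((u 0 = v 0 ∧ Adj n (Fin.tail u) (Fin.tail v)) ∨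
        (u = root (n + 1) ∧ (v 0 = 1 ∨ v 0 = 2) ∧ IsLeaf (Fin.tail v)) ∨
        (v = root (n + 1) ∧ (u 0 = 1 ∨ u 0 = 2) ∧ IsLeaf (Fin.tail u))))

theorem adj_symm : ∀ (n : ℕ) (u v : Vert n), Adj n u v → Adj n v u
  | 0, _, _, h => h.elim
  | n + 1, _, _, h =>
      h.elim (fun h1 => Or.inl ⟨h1.1.symm, adj_symm n _ _ h1.2⟩)
        (fun h2 => h2.elim (fun a => Or.inr (Or.inr a)) (fun a => Or.inr (Or.inl a)))

theorem adj_irrefl : (n : ℕ) → ∀ v : Vert n, ¬ Adj n v v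
  | 0 => fun _ h => h
  | n + 1 => by
      intro v h
      rcases h with ⟨-, h2⟩ | ⟨h1, h2, -⟩ | ⟨h1, h2, -⟩
      · exact adj_irrefl n (Fin.tail v) h2
      · rw [h1] at h2
        exact h2.elim (fun c => absurd c (by simp [root])) (fun c => absurd c (by simp [root]))
      · rw [h1] at h2
        exact h2.elim (fun c => absurd c (by simp [root])) (fun c => absurd c (by simp [root]))

/-- The `n`-th generation of the Barabási–Ravasz–Vicsek deterministic scale-free
network, as a simple graph (for `n ≥ 1`; `G 0` is the trivial one-vertex graph). -/
def G (n : ℕ) : SimpleGraph (Vert n) where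
  Adj := Adj n
  symm := ⟨by intro u v h; exact adj_symm n u v h⟩
  loopless := ⟨by intro v h; exact adj_irrefl n v h⟩

instance (n : ℕ) : DecidableRel (G n).Adj := instDecAdj n

end DSFN


namespace DSFN

/-- Run-length degree: counts suffix levels at which the vertex is a leaf. -/
def rdeg : (n : ℕ) → Vert n → ℕ
  | 0, _ => 0
  | n+1, v => rdeg n (Fin.tail v) + (if v 0 ≠ 0 ∧ IsLeaf (Fin.tail v) then 1 else 0)

lemma rdeg_succ (n : ℕ) (v : Vert (n+1)) :
    rdeg (n+1) v = rdeg n (Fin.tail v) + (if v 0 ≠ 0 ∧ IsLeaf (Fin.tail v) then 1 else 0) := rfl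

lemma isLeaf_zero (v : Vert 0) : IsLeaf v := fun i => i.elim0

lemma isLeaf_iff_head_tail {n : ℕ} (v : Vert (n+1)) :
    IsLeaf v ↔ v 0 ≠ 0 ∧ IsLeaf (Fin.tail v) := by
  unfold IsLeaf
  rw [Fin.forall_fin_succ]
  exact Iff.rfl

lemma fin3_cases : ∀ a : Fin 3, (a = 1 ∨ a = 2) ↔ a ≠ 0 := by decide

lemma rdeg_le : ∀ (n : ℕ) (v : Vert n), rdeg n v ≤ n
  | 0, _ => le_refl 0
  | n+1, v => by
      have := rdeg_le n (Fin.tail v)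
      rw [rdeg_succ]; split <;> omega

lemma rdeg_eq_iff_isLeaf : ∀ (n : ℕ) (v : Vert n), rdeg n v = n ↔ IsLeaf v
  | 0, v => by simpa [rdeg] using isLeaf_zero v
  | n+1, v => by
      have h1 := rdeg_le n (Fin.tail v)
      have h2 := rdeg_eq_iff_isLeaf n (Fin.tail v)
      rw [isLeaf_iff_head_tail, rdeg_succ]
      by_cases h : v 0 ≠ 0 ∧ IsLeaf (Fin.tail v)
      · rw [if_pos h]
        have : rdeg n (Fin.tail v) = n := h2.mpr h.2
        simp [h, this]
      · rw [if_neg h]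
        constructor
        · intro he
          exact absurd ⟨by omega, h2.mp (by omega)⟩ h
        · intro he; exact absurd he h

lemma isHub_iff_last {n : ℕ} (v : Vert (n+1)) : IsHub v ↔ v (Fin.last n) = 0 := by
  constructor
  · intro h; exact h (Fin.last n) rfl
  · intro h i hi
    have : i = Fin.last n := Fin.ext (by simpa using hi)
    rwa [this]

lemma isHub_tail {n : ℕ} (v : Vert (n+2)) : IsHub (Fin.tail v) ↔ IsHub v := by
  rw [isHub_iff_last, isHub_iff_last]
  have : (Fin.tail v) (Fin.last n) = v (Fin.last (n+1)) := by
    rw [← Fin.succ_last]; rfl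
  rw [this]

lemma isHub_root (n : ℕ) : IsHub (root n) := fun _ _ => rfl

lemma ne_root_of_not_isHub {n : ℕ} {v : Vert n} (h : ¬ IsHub v) : v ≠ root n :=
  fun he => h (he ▸ isHub_root n)

lemma not_isHub_of_isLeaf {n : ℕ} (v : Vert (n+1)) (h : IsLeaf v) : ¬ IsHub v := by
  rw [isHub_iff_last]
  exact h (Fin.last n)

lemma rdeg_pos : ∀ (n : ℕ) (v : Vert (n+1)), ¬ IsHub v → 1 ≤ rdeg (n+1) v
  | 0, v, h => by
      have h0 : v 0 ≠ 0 := by rw [isHub_iff_last] at h; exact h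
      simp [rdeg_succ, h0, isLeaf_zero]
  | n+1, v, h => by
      have := rdeg_pos n (Fin.tail v) (by rwa [isHub_tail])
      rw [rdeg_succ]; omega

lemma card_filter_succ {n : ℕ} (P : Vert (n+1) → Prop) [DecidablePred P] :
    (Finset.univ.filter P).card
      = ∑ a : Fin 3, (Finset.univ.filter (fun w : Vert n => P (Fin.cons a w))).card := by
  rw [← Fintype.card_subtype]
  rw [show ∑ a : Fin 3, (Finset.univ.filter (fun w : Vert n => P (Fin.cons a w))).card
      = ∑ a : Fin 3, Fintype.card {w : Vert n // P (Fin.cons a w)} from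
    Finset.sum_congr rfl (fun a _ => (Fintype.card_subtype _).symm)]
  rw [← Fintype.card_sigma]
  exact Fintype.card_congr
    { toFun := fun v => ⟨v.1 0, Fin.tail v.1, by rw [Fin.cons_self_tail]; exact v.2⟩
      invFun := fun s => ⟨Fin.cons s.1 s.2.1, s.2.2⟩
      left_inv := fun v => Subtype.ext (Fin.cons_self_tail v.1)
      right_inv := fun s => rfl }

lemma card_leaf : ∀ n : ℕ, (Finset.univ.filter (fun v : Vert n => IsLeaf v)).card = 2 ^ n
  | 0 => by
      rw [Finset.filter_true_of_mem (fun v _ => isLeaf_zero v)]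
      simp
  | n+1 => by
      rw [card_filter_succ]
      have h0 : (Finset.univ.filter fun w : Vert n => IsLeaf (Fin.cons (0 : Fin 3) w)).card = 0 := by
        rw [Finset.card_eq_zero, Finset.filter_eq_empty_iff]
        intro w _
        rw [isLeaf_iff_head_tail]
        simp
      have h12 : ∀ a : Fin 3, a ≠ 0 →
          (Finset.univ.filter fun w : Vert n => IsLeaf (Fin.cons a w)).card = 2 ^ n := by
        intro a ha
        rw [← card_leaf n]
        congr 1
        apply Finset.filter_congr
        intro w _
        simp [isLeaf_iff_head_tail, Fin.tail_cons, ha]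
      rw [Fin.sum_univ_three, h0, h12 1 (by decide), h12 2 (by decide)]
      ring

lemma card_copy_nbrs {n : ℕ} (v : Vert (n+1)) :
    (Finset.univ.filter fun u : Vert (n+1) =>
        v 0 = u 0 ∧ Adj n (Fin.tail v) (Fin.tail u)).card
      = (G n).degree (Fin.tail v) := by
  rw [card_filter_succ]
  have key : ∀ a : Fin 3,
      (Finset.univ.filter fun w : Vert n =>
          v 0 = (Fin.cons a w : Vert (n+1)) 0 ∧
            Adj n (Fin.tail v) (Fin.tail (Fin.cons a w : Vert (n+1)))).card
        = if v 0 = a then ((G n).neighborFinset (Fin.tail v)).card else 0 := by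
    intro a
    by_cases h : v 0 = a
    · rw [if_pos h, SimpleGraph.neighborFinset_eq_filter]
      congr 1
      apply Finset.filter_congr
      intro w _
      rw [Fin.cons_zero, Fin.tail_cons]
      exact ⟨fun hw => hw.2, fun hw => ⟨h, hw⟩⟩
    · rw [if_neg h, Finset.card_eq_zero, Finset.filter_eq_empty_iff]
      intro w _
      rw [Fin.cons_zero]
      exact fun hw => h hw.1
  rw [Finset.sum_congr rfl (fun a _ => key a), Finset.sum_ite_eq,
    if_pos (Finset.mem_univ (v 0))]
  rfl

lemma degree_succ {n : ℕ} (v : Vert (n+1)) (hv : v ≠ root (n+1)) :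
    (G (n+1)).degree v
      = (G n).degree (Fin.tail v)
        + (if v 0 ≠ 0 ∧ IsLeaf (Fin.tail v) then 1 else 0) := by
  classical
  rw [SimpleGraph.degree, SimpleGraph.neighborFinset_eq_filter]
  have hadj : ∀ u : Vert (n+1), (G (n+1)).Adj v u ↔
      ((v 0 = u 0 ∧ Adj n (Fin.tail v) (Fin.tail u)) ∨
       (u = root (n+1) ∧ (v 0 = 1 ∨ v 0 = 2) ∧ IsLeaf (Fin.tail v))) := by
    intro u
    show Adj (n+1) v u ↔ _
    constructor
    · rintro (h | h | h)
      · exact Or.inl h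
      · exact absurd h.1 hv
      · exact Or.inr h
    · rintro (h | h)
      · exact Or.inl h
      · exact Or.inr (Or.inr h)
  by_cases hc : v 0 ≠ 0 ∧ IsLeaf (Fin.tail v)
  · have hc' : v 0 = 1 ∨ v 0 = 2 := (fin3_cases (v 0)).mpr hc.1
    rw [if_pos hc]
    have heq : (Finset.univ.filter fun u => (G (n+1)).Adj v u)
        = insert (root (n+1)) (Finset.univ.filter fun u : Vert (n+1) =>
            v 0 = u 0 ∧ Adj n (Fin.tail v) (Fin.tail u)) := by
      ext u
      simp only [Finset.mem_filter, Finset.mem_univ, true_and, Finset.mem_insert, hadj u]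
      constructor
      · rintro (h | h)
        · exact Or.inr h
        · exact Or.inl h.1
      · rintro (h | h)
        · exact Or.inr ⟨h, hc', hc.2⟩
        · exact Or.inl h
    rw [heq, Finset.card_insert_of_notMem, card_copy_nbrs]
    · intro hmem
      rw [Finset.mem_filter] at hmem
      exact hc.1 (show v 0 = 0 from hmem.2.1)
  · rw [if_neg hc]
    have heq : (Finset.univ.filter fun u => (G (n+1)).Adj v u)
        = Finset.univ.filter fun u : Vert (n+1) =>
            v 0 = u 0 ∧ Adj n (Fin.tail v) (Fin.tail u) := by
      ext u
      simp only [Finset.mem_filter, Finset.mem_univ, true_and, hadj u]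
      constructor
      · rintro (h | h)
        · exact h
        · exact absurd ⟨(fin3_cases (v 0)).mp h.2.1, h.2.2⟩ hc
      · exact Or.inl
    rw [heq, card_copy_nbrs]
    omega

lemma degree_zero (v : Vert 0) : (G 0).degree v = 0 := by
  rw [SimpleGraph.degree, Finset.card_eq_zero, SimpleGraph.neighborFinset_eq_filter,
    Finset.filter_eq_empty_iff]
  exact fun u _ h => h

lemma degree_eq_rdeg : ∀ (n : ℕ) (v : Vert (n+1)), ¬ IsHub v →
    (G (n+1)).degree v = rdeg (n+1) v
  | 0, v, h => by
      rw [degree_succ v (ne_root_of_not_isHub h), rdeg_succ, degree_zero]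
      rfl
  | n+1, v, h => by
      rw [degree_succ v (ne_root_of_not_isHub h), rdeg_succ,
        degree_eq_rdeg n (Fin.tail v) (by rwa [isHub_tail])]

lemma isHub_cons {n : ℕ} (a : Fin 3) (w : Vert (n+1)) :
    IsHub (Fin.cons a w : Vert (n+2)) ↔ IsHub w := by
  rw [← isHub_tail (Fin.cons a w : Vert (n+2)), Fin.tail_cons]

lemma rdeg_cons {n : ℕ} (a : Fin 3) (w : Vert n) :
    rdeg (n+1) (Fin.cons a w) = rdeg n w + (if a ≠ 0 ∧ IsLeaf w then 1 else 0) := by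
  rw [rdeg_succ]
  simp only [Fin.cons_zero, Fin.tail_cons]

lemma card_rim_rdeg : ∀ (n i : ℕ), 1 ≤ i → i ≤ n + 1 →
    (Finset.univ.filter fun v : Vert (n+1) => ¬ IsHub v ∧ rdeg (n+1) v = i).card
      = 2 ^ i * 3 ^ (n - i)
  | 0, i, h1, h2 => by
      have hi : i = 1 := by omega
      subst hi
      decide
  | n+1, i, h1, h2 => by
      rw [card_filter_succ, Fin.sum_univ_three]
      rcases Nat.lt_or_ge i (n+1) with hi | hi
      · -- i ≤ n
        have e0 : ∀ a : Fin 3,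
            (Finset.univ.filter fun w : Vert (n+1) =>
              ¬ IsHub (Fin.cons a w : Vert (n+2)) ∧ rdeg (n+2) (Fin.cons a w) = i)
            = Finset.univ.filter fun w : Vert (n+1) => ¬ IsHub w ∧ rdeg (n+1) w = i := by
          intro a
          apply Finset.filter_congr
          intro w _
          rw [isHub_cons, rdeg_cons]
          constructor
          · rintro ⟨hh, he⟩
            refine ⟨hh, ?_⟩
            by_cases hl : IsLeaf w
            · have := (rdeg_eq_iff_isLeaf (n+1) w).mpr hl
              split_ifs at he <;> omega
            · have : ¬ (a ≠ 0 ∧ IsLeaf w) := fun hx => hl hx.2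
              rw [if_neg this] at he
              omega
          · rintro ⟨hh, he⟩
            refine ⟨hh, ?_⟩
            have hl : ¬ IsLeaf w := by
              intro hl
              have := (rdeg_eq_iff_isLeaf (n+1) w).mpr hl
              omega
            have : ¬ (a ≠ 0 ∧ IsLeaf w) := fun hx => hl hx.2
            rw [if_neg this]
            omega
        rw [e0 0, e0 1, e0 2, card_rim_rdeg n i h1 (by omega)]
        have h3 : n + 1 - i = (n - i) + 1 := by omega
        rw [h3, pow_succ]
        ring
      · rcases Nat.lt_or_ge i (n+2) with hi2 | hi2
        · -- i = n+1
          have hi' : i = n + 1 := by omega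
          subst hi'
          have e0 : (Finset.univ.filter fun w : Vert (n+1) =>
              ¬ IsHub (Fin.cons (0:Fin 3) w : Vert (n+2)) ∧ rdeg (n+2) (Fin.cons (0:Fin 3) w) = n+1)
              = Finset.univ.filter fun w : Vert (n+1) => ¬ IsHub w ∧ rdeg (n+1) w = n+1 := by
            apply Finset.filter_congr
            intro w _
            rw [isHub_cons, rdeg_cons]
            simp
          have e12 : ∀ a : Fin 3, a ≠ 0 →
              (Finset.univ.filter fun w : Vert (n+1) =>
                ¬ IsHub (Fin.cons a w : Vert (n+2)) ∧ rdeg (n+2) (Fin.cons a w) = n+1)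
              = ∅ := by
            intro a ha
            rw [Finset.filter_eq_empty_iff]
            intro w _
            rw [isHub_cons, rdeg_cons]
            rintro ⟨hh, he⟩
            by_cases hl : IsLeaf w
            · have := (rdeg_eq_iff_isLeaf (n+1) w).mpr hl
              rw [if_pos ⟨ha, hl⟩] at he
              omega
            · have h4 : ¬ (a ≠ 0 ∧ IsLeaf w) := fun hx => hl hx.2
              rw [if_neg h4] at he
              exact hl ((rdeg_eq_iff_isLeaf (n+1) w).mp (by omega))
          rw [e0, e12 1 (by decide), e12 2 (by decide),
            card_rim_rdeg n (n+1) (by omega) le_rfl]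
          simp
        · -- i = n+2
          have hi' : i = n + 2 := by omega
          subst hi'
          have e0 : (Finset.univ.filter fun w : Vert (n+1) =>
              ¬ IsHub (Fin.cons (0:Fin 3) w : Vert (n+2)) ∧ rdeg (n+2) (Fin.cons (0:Fin 3) w) = n+2)
              = ∅ := by
            rw [Finset.filter_eq_empty_iff]
            intro w _
            rw [isHub_cons, rdeg_cons]
            rintro ⟨hh, he⟩
            have := rdeg_le (n+1) w
            simp at he
            omega
          have e12 : ∀ a : Fin 3, a ≠ 0 →
              (Finset.univ.filter fun w : Vert (n+1) =>
                ¬ IsHub (Fin.cons a w : Vert (n+2)) ∧ rdeg (n+2) (Fin.cons a w) = n+2)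
              = Finset.univ.filter fun w : Vert (n+1) => IsLeaf w := by
            intro a ha
            apply Finset.filter_congr
            intro w _
            rw [isHub_cons, rdeg_cons]
            constructor
            · rintro ⟨hh, he⟩
              by_cases hl : IsLeaf w
              · exact hl
              · have h4 : ¬ (a ≠ 0 ∧ IsLeaf w) := fun hx => hl hx.2
                rw [if_neg h4] at he
                have := rdeg_le (n+1) w
                omega
            · intro hl
              refine ⟨not_isHub_of_isLeaf w hl, ?_⟩
              rw [if_pos ⟨ha, hl⟩, (rdeg_eq_iff_isLeaf (n+1) w).mpr hl]
          rw [e0, e12 1 (by decide), e12 2 (by decide), card_leaf (n+1)]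
          have h5 : n + 1 - (n + 2) = 0 := by omega
          rw [h5, Finset.card_empty]
          ring

end DSFN

open DSFN in
/-- For every `n ≥ 1`: for each `1 ≤ i ≤ n - 1` the number of rim
vertices of `G n` of degree `i` is exactly `2 ^ i * 3 ^ (n-1-i)`; the number of rim
vertices of degree `n` is exactly `2 ^ n`, and these are precisely the leaves of `G n`;
and every rim vertex has degree `i` for some `1 ≤ i ≤ n`. -/
theorem dsfn_rim_degree_distribution (n : ℕ) (hn : 1 ≤ n) :
    (∀ i : ℕ, 1 ≤ i → i ≤ n - 1 →
      (Finset.univ.filter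
        (fun v : Vert n => ¬ IsHub v ∧ (G n).degree v = i)).card
        = 2 ^ i * 3 ^ (n - 1 - i)) ∧
    (Finset.univ.filter
        (fun v : Vert n => ¬ IsHub v ∧ (G n).degree v = n)).card = 2 ^ n ∧
    (∀ v : Vert n, (¬ IsHub v ∧ (G n).degree v = n) ↔ IsLeaf v) ∧
    (∀ v : Vert n, ¬ IsHub v → ∃ i : ℕ, 1 ≤ i ∧ i ≤ n ∧ (G n).degree v = i) := by
  obtain ⟨m, rfl⟩ : ∃ m, n = m + 1 := ⟨n - 1, by omega⟩
  have hdeg : ∀ v : Vert (m+1), ¬ IsHub v → (G (m+1)).degree v = rdeg (m+1) v :=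
    degree_eq_rdeg m
  have hfe : ∀ i : ℕ,
      (Finset.univ.filter fun v : Vert (m+1) => ¬ IsHub v ∧ (G (m+1)).degree v = i)
      = Finset.univ.filter fun v : Vert (m+1) => ¬ IsHub v ∧ rdeg (m+1) v = i := by
    intro i
    apply Finset.filter_congr
    intro v _
    constructor
    · rintro ⟨hh, hd⟩; exact ⟨hh, by rw [← hdeg v hh]; exact hd⟩
    · rintro ⟨hh, hd⟩; exact ⟨hh, by rw [hdeg v hh]; exact hd⟩
  refine ⟨?_, ?_, ?_, ?_⟩
  · intro i hi1 hi2
    rw [hfe i, card_rim_rdeg m i hi1 (by omega)]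
    have h3 : m + 1 - 1 - i = m - i := by omega
    rw [h3]
  · rw [hfe (m+1), card_rim_rdeg m (m+1) (by omega) le_rfl]
    simp
  · intro v
    constructor
    · rintro ⟨hh, hd⟩
      exact (rdeg_eq_iff_isLeaf (m+1) v).mp (by rw [← hdeg v hh]; exact hd)
    · intro hl
      have hh := not_isHub_of_isLeaf v hl
      exact ⟨hh, by rw [hdeg v hh]; exact (rdeg_eq_iff_isLeaf (m+1) v).mpr hl⟩
  · intro v hh
    exact ⟨rdeg (m+1) v, rdeg_pos m v hh, rdeg_le (m+1) v, hdeg v hh⟩
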